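/- arXiv:2108.01248 — 2 statements merged into one kernel-verified Lean document; each statement's English description precedes it below -/
import Mathlib

section
/- Let 0 < θ̲ < 1, γ > 0, θ ∈ [θ̲, θ̄] with 1/2 ∨ θ̲ < θ̄ < 1, Δ ∈ (0, (1-θ̄)/θ̄), and let (a_j)_{j≥0} be nonnegative reals. Then for every k ≥ 1: ∑_{j=0}^{k-1} (1+(j+1)Δ)^γ a_{⌊θj⌋} ≤ (⌊1/θ̲⌋+1) θ̲^{-γ} ∑_{j=0}^{k-1} (1+(j+1)Δ)^γ a_j. -/
/-- Polynomial-weight grouping estimate: for `0 < θ̲ < 1`, `γ > 0`,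
`θ ∈ [θ̲, θ̄]` with `1/2 ∨ θ̲ < θ̄ < 1`, `Δ ∈ (0, (1-θ̄)/θ̄)` and nonnegative
reals `(a_j)`, for every `k ≥ 1`:
`∑_{j<k} (1+(j+1)Δ)^γ a_{⌊θj⌋} ≤ (⌊1/θ̲⌋+1) θ̲^{-γ} ∑_{j<k} (1+(j+1)Δ)^γ a_j`. -/
theorem stmt_10 (tl tb θ γ Δ : ℝ) (a : ℕ → ℝ)
    (htl0 : 0 < tl) (htl1 : tl < 1) (hγ : 0 < γ)
    (htb1 : max (1 / 2) tl < tb) (htb2 : tb < 1)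
    (hθ : θ ∈ Set.Icc tl tb) (hΔ0 : 0 < Δ) (hΔ : Δ < (1 - tb) / tb)
    (ha : ∀ j, 0 ≤ a j) (k : ℕ) (hk : 1 ≤ k) :
    ∑ j ∈ Finset.range k, (1 + ((j : ℝ) + 1) * Δ) ^ γ * a ⌊θ * (j : ℝ)⌋₊
      ≤ ((⌊1 / tl⌋ : ℝ) + 1) * tl ^ (-γ) *
          ∑ j ∈ Finset.range k, (1 + ((j : ℝ) + 1) * Δ) ^ γ * a j := by
  obtain ⟨hθl, hθb⟩ := hθ
  have hθ0 : 0 < θ := lt_of_lt_of_le htl0 hθl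
  have htb0 : 0 < tb := lt_trans (lt_of_lt_of_le (by norm_num) (le_max_left _ _)) htb1
  have hθΔ : θ * (1 + Δ) < 1 := by
    have h1 : Δ * tb < 1 - tb := (lt_div_iff₀ htb0).mp hΔ
    nlinarith
  set M : ℕ := ⌊1 / tl⌋₊ + 1 with hM
  set C : ℝ := tl ^ (-γ) with hC
  have hC0 : 0 ≤ C := Real.rpow_nonneg htl0.le _
  set g : ℕ → ℝ := fun i => (1 + ((i : ℝ) + 1) * Δ) ^ γ * a i with hg
  have hg0 : ∀ i, 0 ≤ g i := fun i =>
    mul_nonneg (Real.rpow_nonneg (by positivity) _) (ha i)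
  set f : ℕ → ℕ := fun j => ⌊θ * (j : ℝ)⌋₊ with hf
  -- pointwise bound
  have hpt : ∀ j : ℕ, (1 + ((j : ℝ) + 1) * Δ) ^ γ * a (f j) ≤ C * g (f j) := by
    intro j
    have hfloor : (f j : ℝ) ≤ θ * j := Nat.floor_le (by positivity)
    have hfloor2 : θ * j < (f j : ℝ) + 1 := Nat.lt_floor_add_one _
    have hbase : (1 : ℝ) + ((j : ℝ) + 1) * Δ ≤ θ⁻¹ * (1 + ((f j : ℝ) + 1) * Δ) := by
      rw [inv_mul_eq_div, le_div_iff₀ hθ0]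
      nlinarith [mul_le_mul_of_nonneg_right hfloor2.le hΔ0.le]
    have hpow : (1 + ((j : ℝ) + 1) * Δ) ^ γ ≤ θ ^ (-γ) * (1 + ((f j : ℝ) + 1) * Δ) ^ γ := by
      have h1 : (1 + ((j : ℝ) + 1) * Δ) ^ γ ≤ (θ⁻¹ * (1 + ((f j : ℝ) + 1) * Δ)) ^ γ :=
        Real.rpow_le_rpow (by positivity) hbase hγ.le
      rwa [Real.mul_rpow (by positivity) (by positivity),
        Real.inv_rpow hθ0.le, ← Real.rpow_neg hθ0.le] at h1
    have hθtl : θ ^ (-γ) ≤ C := by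
      rw [hC, Real.rpow_neg hθ0.le, Real.rpow_neg htl0.le]
      exact inv_anti₀ (Real.rpow_pos_of_pos htl0 γ)
        (Real.rpow_le_rpow htl0.le hθl hγ.le)
    calc (1 + ((j : ℝ) + 1) * Δ) ^ γ * a (f j)
        ≤ (θ ^ (-γ) * (1 + ((f j : ℝ) + 1) * Δ) ^ γ) * a (f j) :=
          mul_le_mul_of_nonneg_right hpow (ha _)
      _ ≤ (C * (1 + ((f j : ℝ) + 1) * Δ) ^ γ) * a (f j) := by
          apply mul_le_mul_of_nonneg_right _ (ha _)
          exact mul_le_mul_of_nonneg_right hθtl (Real.rpow_nonneg (by positivity) _)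
      _ = C * g (f j) := by rw [hg]; ring
  -- fiber card bound
  have hcard : ∀ b : ℕ, ((Finset.range k).filter fun j => f j = b).card ≤ M := by
    intro b
    set n0 : ℕ := ⌈(b : ℝ) / θ⌉₊ with hn0
    have hsub : ((Finset.range k).filter fun j => f j = b) ⊆ Finset.Ico n0 (n0 + M) := by
      intro j hj
      simp only [Finset.mem_filter, Finset.mem_range] at hj
      obtain ⟨hjk, hjb⟩ := hj
      have hb1 : (b : ℝ) ≤ θ * j := by
        rw [← hjb]; exact Nat.floor_le (by positivity)
      have hb2 : θ * j < (b : ℝ) + 1 := by rw [← hjb]; exact Nat.lt_floor_add_one _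
      have hjl : n0 ≤ j := by
        rw [hn0, Nat.ceil_le, div_le_iff₀ hθ0]; nlinarith
      have hju : (j : ℝ) < (n0 : ℝ) + 1 / tl := by
        have h1 : (b : ℝ) / θ ≤ n0 := Nat.le_ceil _
        have h2 : (j : ℝ) < ((b : ℝ) + 1) / θ := by rw [lt_div_iff₀ hθ0]; nlinarith
        have h3 : ((b : ℝ) + 1) / θ = (b : ℝ) / θ + 1 / θ := by ring
        have h4 : 1 / θ ≤ 1 / tl := by
          apply one_div_le_one_div_of_le htl0 hθl
        linarith
      have hjM : j < n0 + M := by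
        have h5 : (j - n0 : ℕ) ≤ ⌊1 / tl⌋₊ := by
          apply Nat.le_floor
          have : ((j - n0 : ℕ) : ℝ) = (j : ℝ) - n0 := by
            push_cast [hjl]; ring
          rw [this]; linarith
        omega
      exact Finset.mem_Ico.mpr ⟨hjl, hjM⟩
    calc ((Finset.range k).filter fun j => f j = b).card
        ≤ (Finset.Ico n0 (n0 + M)).card := Finset.card_le_card hsub
      _ = M := by rw [Nat.card_Ico]; omega
  -- image inside range k
  have himg : (Finset.range k).image f ⊆ Finset.range k := by
    intro b hb
    obtain ⟨j, hj, rfl⟩ := Finset.mem_image.mp hb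
    rw [Finset.mem_range] at hj ⊢
    rw [hf]
    have : θ * j < (k : ℝ) := by
      have : θ * j ≤ (j : ℝ) := by nlinarith [hθb, htb2, Nat.cast_nonneg (α := ℝ) j]
      have hjk : (j : ℝ) < (k : ℝ) := by exact_mod_cast hj
      linarith
    exact Nat.floor_lt (by positivity) |>.mpr this
  -- main chain
  have step1 : ∑ j ∈ Finset.range k, (1 + ((j : ℝ) + 1) * Δ) ^ γ * a (f j)
      ≤ C * ∑ j ∈ Finset.range k, g (f j) := by
    rw [Finset.mul_sum]
    exact Finset.sum_le_sum fun j _ => hpt j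
  have step2 : ∑ j ∈ Finset.range k, g (f j) ≤ (M : ℝ) * ∑ i ∈ Finset.range k, g i := by
    rw [Finset.sum_comp]
    calc ∑ b ∈ (Finset.range k).image f,
          ((Finset.range k).filter fun j => f j = b).card • g b
        ≤ ∑ b ∈ (Finset.range k).image f, (M : ℝ) * g b := by
          apply Finset.sum_le_sum
          intro b _
          rw [nsmul_eq_mul]
          exact mul_le_mul_of_nonneg_right (by exact_mod_cast hcard b) (hg0 b)
      _ ≤ ∑ b ∈ Finset.range k, (M : ℝ) * g b := by
          apply Finset.sum_le_sum_of_subset_of_nonneg himg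
          intro b _ _
          exact mul_nonneg (by positivity) (hg0 b)
      _ = (M : ℝ) * ∑ i ∈ Finset.range k, g i := by rw [Finset.mul_sum]
  have hMcast : ((⌊1 / tl⌋ : ℝ) : ℝ) + 1 = (M : ℝ) := by
    rw [hM]
    have h := Int.natCast_floor_eq_floor (show (0:ℝ) ≤ 1 / tl by positivity)
    push_cast [← h]
    ring
  calc ∑ j ∈ Finset.range k, (1 + ((j : ℝ) + 1) * Δ) ^ γ * a (f j)
      ≤ C * ∑ j ∈ Finset.range k, g (f j) := step1
    _ ≤ C * ((M : ℝ) * ∑ i ∈ Finset.range k, g i) :=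
        mul_le_mul_of_nonneg_left step2 hC0
    _ = ((⌊1 / tl⌋ : ℝ) + 1) * C * ∑ i ∈ Finset.range k, g i := by
        rw [hMcast]; ring
end

section
/- (Discrete semimartingale convergence theorem) Let (ξ₁(i))_{i≥0} and (ξ₂(i))_{i≥0} be nondecreasing sequences of nonnegative random variables with ξ₁(i), ξ₂(i) measurable with respect to ℱ_{i-1} for i ≥ 1 and ξ₁(0) = ξ₂(0) = 0 a.s., let (M(i))_{i≥0} be a real-valued local martingale with M(0) = 0 a.s., and let ξ be a nonnegative ℱ₀-measurable random variable with E[ξ] < ∞. Set η(i) = ξ + ξ₁(i) - ξ₂(i) + M(i) and suppose η(i) ≥ 0 for all i. Then almost surely on the event {lim_{i→∞} ξ₁(i) < ∞}, both lim_{i→∞} ξ₂(i) < ∞ and lim_{i→∞} η(i) exists finitely. -/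
open MeasureTheory Filter
open scoped ENNReal Classical

namespace Stmt12Aux

variable {Ω : Type*}

/-- replace value at time 0 by 0 -/
noncomputable def pr (f : ℕ → Ω → ℝ) : ℕ → Ω → ℝ := fun i ω => if i = 0 then 0 else f i ω

/-- stopped sum of increments -/
noncomputable def psum (c : ℕ → Ω → Prop) (f : ℕ → Ω → ℝ) : ℕ → Ω → ℝ :=
  fun i ω => ∑ j ∈ Finset.range i, if c j ω then f (j + 1) ω - f j ω else 0

lemma psum_zero (c : ℕ → Ω → Prop) (f : ℕ → Ω → ℝ) (ω : Ω) : psum c f 0 ω = 0 := by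
  simp [psum]

lemma psum_succ (c : ℕ → Ω → Prop) (f : ℕ → Ω → ℝ) (i : ℕ) (ω : Ω) :
    psum c f (i + 1) ω = psum c f i ω + (if c i ω then f (i + 1) ω - f i ω else 0) := by
  simp [psum, Finset.sum_range_succ]

lemma psum_sub (c : ℕ → Ω → Prop) (f g : ℕ → Ω → ℝ) (i : ℕ) (ω : Ω) :
    psum c (fun j ω' => f j ω' - g j ω') i ω = psum c f i ω - psum c g i ω := by
  simp only [psum, ← Finset.sum_sub_distrib]
  refine Finset.sum_congr rfl fun j _ => ?_
  by_cases h : c j ω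
  · simp [h]; ring
  · simp [h]

lemma psum_congr {c c' : ℕ → Ω → Prop} (f : ℕ → Ω → ℝ) {i : ℕ} {ω : Ω}
    (h : ∀ j, j < i → (c j ω ↔ c' j ω)) : psum c f i ω = psum c' f i ω := by
  refine Finset.sum_congr rfl fun j hj => ?_
  rw [Finset.mem_range] at hj
  by_cases hc : c j ω
  · rw [if_pos hc, if_pos ((h j hj).1 hc)]
  · rw [if_neg hc, if_neg (fun hc' => hc ((h j hj).2 hc'))]

lemma psum_of_all {c : ℕ → Ω → Prop} (f : ℕ → Ω → ℝ) {i : ℕ} {ω : Ω}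
    (h : ∀ j, j < i → c j ω) : psum c f i ω = f i ω - f 0 ω := by
  induction i with
  | zero => simp [psum_zero]
  | succ n ih =>
      rw [psum_succ, ih (fun j hj => h j (hj.trans (Nat.lt_succ_self n))),
        if_pos (h n (Nat.lt_succ_self n))]
      ring

lemma psum_struct {c : ℕ → Ω → Prop} (hc : ∀ (ω : Ω) (j k : ℕ), j ≤ k → c k ω → c j ω)
    (f : ℕ → Ω → ℝ) (i : ℕ) (ω : Ω) :
    ∃ k, k ≤ i ∧ psum c f i ω = f k ω - f 0 ω ∧ (∀ j, j < k → c j ω) ∧ (k = i ∨ ¬ c k ω) := by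
  induction i with
  | zero => exact ⟨0, le_rfl, by simp [psum_zero], fun j hj => absurd hj (Nat.not_lt_zero j),
      Or.inl rfl⟩
  | succ n ih =>
      obtain ⟨k, hki, hval, hall, hlast⟩ := ih
      rcases hlast with rfl | hnc
      · by_cases hcn : c k ω
        · refine ⟨k + 1, Nat.succ_le_succ hki, ?_, ?_, Or.inl rfl⟩
          · rw [psum_succ, hval, if_pos hcn]; ring
          · intro j hj
            rcases Nat.lt_succ_iff_lt_or_eq.1 hj with h | rfl
            exacts [hall j h, hcn]
        · exact ⟨k, le_of_lt (Nat.lt_succ_self k), by rw [psum_succ, hval, if_neg hcn]; ring,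
            hall, Or.inr hcn⟩
      · have hcn : ¬ c n ω := fun h => hnc (hc ω k n hki h)
        exact ⟨k, hki.trans (le_of_lt (Nat.lt_succ_self n)),
          by rw [psum_succ, hval, if_neg hcn]; ring, hall, Or.inr hnc⟩

lemma psum_mono_index {c : ℕ → Ω → Prop} {f : ℕ → Ω → ℝ}
    (hf : ∀ j (ω : Ω), f j ω ≤ f (j + 1) ω) {i i' : ℕ} (h : i ≤ i') (ω : Ω) :
    psum c f i ω ≤ psum c f i' ω := by
  refine Finset.sum_le_sum_of_subset_of_nonneg (Finset.range_subset_range.2 h) fun j _ _ => ?_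
  by_cases hc : c j ω
  · simp [hc, sub_nonneg.2 (hf j ω)]
  · simp [hc]

lemma psum_nonneg {c : ℕ → Ω → Prop} {f : ℕ → Ω → ℝ}
    (hf : ∀ j (ω : Ω), f j ω ≤ f (j + 1) ω) (i : ℕ) (ω : Ω) : 0 ≤ psum c f i ω :=
  Finset.sum_nonneg fun j _ => by
    by_cases h : c j ω
    · simp [h, sub_nonneg.2 (hf j ω)]
    · simp [h]

lemma sp_eq (M : ℕ → Ω → ℝ) (τ : Ω → ℕ) (i : ℕ) (ω : Ω) :
    MeasureTheory.stoppedProcess M (fun ω => ((τ ω : ℕ) : WithTop ℕ)) i ω = M (min i (τ ω)) ω :=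
  rfl

end Stmt12Aux

/-- A discrete-time local martingale: there is a localizing sequence of stopping
times tending to infinity along which the stopped process is a martingale. -/
def IsDiscreteLocalMartingale {Ω : Type*} {m : MeasurableSpace Ω}
    (ℱ : Filtration ℕ m) (μ : Measure Ω) (M : ℕ → Ω → ℝ) : Prop :=
  ∃ τ : ℕ → Ω → ℕ,
    (∀ n, IsStoppingTime ℱ (fun ω => ((τ n ω : ℕ) : WithTop ℕ))) ∧
    (∀ ω, Monotone fun n => τ n ω) ∧
    (∀ ω, Tendsto (fun n => τ n ω) atTop atTop) ∧
    (∀ n, Martingale (MeasureTheory.stoppedProcess M (fun ω => ((τ n ω : ℕ) : WithTop ℕ))) ℱ μ)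

/-- Discrete semimartingale convergence theorem: if `η(i) = ξ + ξ₁(i) - ξ₂(i) + M(i) ≥ 0`
with `ξ₁, ξ₂` nondecreasing nonnegative predictable sequences vanishing at `0`,
`ξ ≥ 0` integrable and `ℱ₀`-measurable, and `M` a local martingale with `M(0) = 0`,
then a.s. on `{lim ξ₁ < ∞}` one has `lim ξ₂ < ∞` and `η` converges to a finite limit. -/
theorem stmt_12 {Ω : Type*} {m : MeasurableSpace Ω} {μ : Measure Ω}
    [IsProbabilityMeasure μ] (ℱ : Filtration ℕ m)
    (ξ : Ω → ℝ) (ξ₁ ξ₂ M η : ℕ → Ω → ℝ)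
    (hξ₁nonneg : ∀ i ω, 0 ≤ ξ₁ i ω) (hξ₂nonneg : ∀ i ω, 0 ≤ ξ₂ i ω)
    (hξ₁mono : ∀ ω, Monotone fun i => ξ₁ i ω)
    (hξ₂mono : ∀ ω, Monotone fun i => ξ₂ i ω)
    (hξ₁meas : ∀ i : ℕ, 1 ≤ i → Measurable[ℱ (i - 1)] (ξ₁ i))
    (hξ₂meas : ∀ i : ℕ, 1 ≤ i → Measurable[ℱ (i - 1)] (ξ₂ i))
    (hξ₁0 : ∀ᵐ ω ∂μ, ξ₁ 0 ω = 0) (hξ₂0 : ∀ᵐ ω ∂μ, ξ₂ 0 ω = 0)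
    (hξnonneg : ∀ ω, 0 ≤ ξ ω) (hξmeas : Measurable[ℱ 0] ξ)
    (hξint : Integrable ξ μ)
    (hM : IsDiscreteLocalMartingale ℱ μ M) (hM0 : ∀ᵐ ω ∂μ, M 0 ω = 0)
    (hη : ∀ i ω, η i ω = ξ ω + ξ₁ i ω - ξ₂ i ω + M i ω)
    (hηnonneg : ∀ i ω, 0 ≤ η i ω) :
    ∀ᵐ ω ∂μ, BddAbove (Set.range fun i => ξ₁ i ω) →
      BddAbove (Set.range fun i => ξ₂ i ω) ∧
      ∃ l : ℝ, Tendsto (fun i => η i ω) atTop (nhds l) := by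
  classical
  obtain ⟨τ, hτstop, hτmono, hτtend, hτmart⟩ := hM
  set S : ℕ → ℕ → Ω → ℝ := fun n => MeasureTheory.stoppedProcess M (fun ω => ((τ n ω : ℕ) : WithTop ℕ)) with hSdef
  -- measurability of M
  have hMadp : ∀ i, Measurable[ℱ i] (M i) := by
    intro i
    letI : MeasurableSpace Ω := ℱ i
    have h1 : ∀ n, Measurable (fun ω => S n i ω) :=
      fun n => ((hτmart n).1 i).measurable
    refine measurable_of_tendsto_metrizable h1 (tendsto_pi_nhds.2 fun ω => ?_)
    refine tendsto_const_nhds.congr' ?_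
    filter_upwards [(hτtend ω).eventually_ge_atTop i] with n hn
    simp [hSdef, Stmt12Aux.sp_eq, min_eq_left hn]
  have hMm : ∀ i, Measurable (M i) := fun i => (hMadp i).mono (ℱ.le i) le_rfl
  have hξ₁m : ∀ k : ℕ, Measurable[ℱ k] (ξ₁ (k + 1)) := by
    intro k
    have := hξ₁meas (k + 1) (Nat.le_add_left 1 k)
    simpa using this
  have hξ₂m : ∀ k : ℕ, Measurable[ℱ k] (ξ₂ (k + 1)) := by
    intro k
    have := hξ₂meas (k + 1) (Nat.le_add_left 1 k)
    simpa using this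
  set G : ℕ → Ω → ℝ := Stmt12Aux.pr ξ₂ with hGdef
  have hGsucc : ∀ (j : ℕ) (ω : Ω), G (j + 1) ω = ξ₂ (j + 1) ω := fun j ω => by
    simp [hGdef, Stmt12Aux.pr]
  have hG0 : ∀ ω : Ω, G 0 ω = 0 := fun ω => by simp [hGdef, Stmt12Aux.pr]
  have hGstep : ∀ (j : ℕ) (ω : Ω), G j ω ≤ G (j + 1) ω := by
    intro j ω
    cases j with
    | zero => rw [hG0, hGsucc]; exact hξ₂nonneg 1 ω
    | succ k =>
        rw [hGsucc, hGsucc]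
        exact hξ₂mono ω (Nat.le_succ (k + 1))
  have hGmeas : ∀ j, Measurable[ℱ j] (G j) := by
    intro j
    cases j with
    | zero =>
        have : G 0 = fun _ => (0 : ℝ) := funext hG0
        rw [this]; exact measurable_const
    | succ k =>
        have : G (k + 1) = ξ₂ (k + 1) := funext (hGsucc k)
        rw [this]; exact (hξ₂m k).mono (ℱ.mono (Nat.le_succ k)) le_rfl
  have hGmeas1 : ∀ j, Measurable[ℱ j] (G (j + 1)) := by
    intro j
    have : G (j + 1) = ξ₂ (j + 1) := funext (hGsucc j)
    rw [this]; exact hξ₂m j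
  set F : ℕ → Ω → ℝ := fun j ω => M j ω - G j ω with hFdef
  -- the key per-level statement
  have key : ∀ a : ℕ, ∀ᵐ ω ∂μ,
      (∃ cl : ℝ, Tendsto
        (fun i => ξ ω + (a : ℝ) +
          Stmt12Aux.psum (fun j ω' => ∀ k ≤ j, ξ₁ (k + 1) ω' ≤ (a : ℝ)) F i ω)
        atTop (nhds cl)) ∧
      (⨆ i, ENNReal.ofReal
        (Stmt12Aux.psum (fun j ω' => ∀ k ≤ j, ξ₁ (k + 1) ω' ≤ (a : ℝ)) G i ω)) < ⊤ := by
    intro a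
    set D : ℕ → Ω → Prop := fun j ω' => ∀ k ≤ j, ξ₁ (k + 1) ω' ≤ (a : ℝ) with hDdef
    set cp : ℕ → ℕ → Ω → Prop := fun n j ω' => D j ω' ∧ j < τ n ω' with hcpdef
    have hDanti : ∀ (ω : Ω) (j k : ℕ), j ≤ k → D k ω → D j ω :=
      fun ω j k hjk h k' hk' => h k' (hk'.trans hjk)
    have hcpanti : ∀ n (ω : Ω) (j k : ℕ), j ≤ k → cp n k ω → cp n j ω :=
      fun n ω j k hjk h => ⟨hDanti ω j k hjk h.1, lt_of_le_of_lt hjk h.2⟩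
    have hcpD : ∀ n (ω : Ω) j, cp n j ω → D j ω := fun n ω j h => h.1
    have hDset : ∀ j, MeasurableSet[ℱ j] {ω | D j ω} := by
      intro j
      have heq : {ω | D j ω} = ⋂ (k : ℕ) (_ : k ≤ j), {ω | ξ₁ (k + 1) ω ≤ (a : ℝ)} := by
        ext ω; simp [hDdef, Set.mem_iInter]
      rw [heq]
      refine MeasurableSet.iInter fun k => MeasurableSet.iInter fun hk => ?_
      exact measurableSet_le ((hξ₁m k).mono (ℱ.mono hk) le_rfl) measurable_const
    have hcpset : ∀ n j, MeasurableSet[ℱ j] {ω | cp n j ω} := by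
      intro n j
      have heq : {ω | cp n j ω} = {ω | D j ω} ∩ {ω | τ n ω ≤ j}ᶜ := by
        ext ω; simp [hcpdef, not_le]
      rw [heq]
      exact (hDset j).inter (show MeasurableSet[ℱ j] {ω | τ n ω ≤ j} by simpa using hτstop n j).compl
    set Z : ℕ → Ω → ℝ := fun i ω' => ξ ω' + (a : ℝ) + Stmt12Aux.psum D F i ω' with hZdef
    set Y : ℕ → ℕ → Ω → ℝ :=
      fun n i ω' => ξ ω' + (a : ℝ) + Stmt12Aux.psum (cp n) F i ω' with hYdef
    -- nonnegativity
    have hform : ∀ (cc : ℕ → Ω → Prop), (∀ (ω : Ω) (j k : ℕ), j ≤ k → cc k ω → cc j ω) →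
        (∀ (ω : Ω) j, cc j ω → D j ω) → ∀ (ω : Ω), M 0 ω = 0 → ∀ i,
        0 ≤ ξ ω + (a : ℝ) + Stmt12Aux.psum cc F i ω := by
      intro cc hanti hccD ω h0 i
      obtain ⟨k, hki, hval, hall, -⟩ := Stmt12Aux.psum_struct hanti F i ω
      rw [hval]
      have hF0 : F 0 ω = 0 := by simp [hFdef, hG0, h0]
      rw [hF0, sub_zero]
      have ha0 : (0:ℝ) ≤ (a:ℝ) := Nat.cast_nonneg a
      cases k with
      | zero =>
          rw [hF0]
          linarith [hξnonneg ω]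
      | succ k' =>
          have hξ₁k : ξ₁ (k' + 1) ω ≤ (a:ℝ) :=
            (hccD ω k' (hall k' (Nat.lt_succ_self k'))) k' le_rfl
          have hGk : G (k' + 1) ω = ξ₂ (k' + 1) ω := hGsucc k' ω
          have hηn := hηnonneg (k' + 1) ω
          rw [hη (k' + 1) ω] at hηn
          show 0 ≤ ξ ω + (a:ℝ) + (M (k' + 1) ω - G (k' + 1) ω)
          rw [hGk]
          linarith
    have hYnn : ∀ n i, 0 ≤ᵐ[μ] Y n i := by
      intro n i
      filter_upwards [hM0] with ω h0
      exact hform (cp n) (hcpanti n) (hcpD n) ω h0 i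
    have hZnn : ∀ i, 0 ≤ᵐ[μ] Z i := by
      intro i
      filter_upwards [hM0] with ω h0
      exact hform D hDanti (fun _ _ h => h) ω h0 i
    -- increments
    set dB : ℕ → ℕ → Ω → ℝ :=
      fun n j ω' => if cp n j ω' then G (j + 1) ω' - G j ω' else 0 with hdBdef
    set mB : ℕ → ℕ → Ω → ℝ :=
      fun n j ω' => if cp n j ω' then M (j + 1) ω' - M j ω' else 0 with hmBdef
    have hYsucc : ∀ n i (ω : Ω), Y n (i + 1) ω = Y n i ω + (mB n i ω - dB n i ω) := by
      intro n i ω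
      simp only [hYdef, hmBdef, hdBdef, Stmt12Aux.psum_succ, hFdef]
      by_cases h : cp n i ω
      · simp only [if_pos h]; ring
      · simp only [if_neg h]; ring
    have hmB_eq : ∀ n j,
        mB n j = Set.indicator {ω | D j ω} (fun ω => S n (j + 1) ω - S n j ω) := by
      intro n j
      funext ω
      by_cases hDj : D j ω
      · rw [Set.indicator_of_mem (show ω ∈ {ω | D j ω} from hDj)]
        by_cases hτ : j < τ n ω
        · have h1 : min (j+1) (τ n ω) = j + 1 := min_eq_left (Nat.succ_le_of_lt hτ)
          have h2 : min j (τ n ω) = j := min_eq_left hτ.le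
          simp only [hmBdef, hSdef, Stmt12Aux.sp_eq, h1, h2]
          rw [if_pos (⟨hDj, hτ⟩ : cp n j ω)]
        · have hle : τ n ω ≤ j := le_of_not_gt hτ
          have h1 : min (j+1) (τ n ω) = τ n ω := min_eq_right (hle.trans (Nat.le_succ j))
          have h2 : min j (τ n ω) = τ n ω := min_eq_right hle
          simp only [hmBdef, hSdef, Stmt12Aux.sp_eq, h1, h2]
          rw [if_neg (fun h : cp n j ω => hτ h.2)]
          simp
      · rw [Set.indicator_of_notMem (show ω ∉ {ω | D j ω} from hDj)]
        simp only [hmBdef]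
        rw [if_neg (fun h : cp n j ω => hDj h.1)]
    have hmBint : ∀ n j, Integrable (mB n j) μ := by
      intro n j
      rw [hmB_eq n j]
      exact (((hτmart n).integrable (j+1)).sub ((hτmart n).integrable j)).indicator
        (ℱ.le j _ (hDset j))
    have hmBset : ∀ n j (s : Set Ω), MeasurableSet[ℱ j] s → ∫ ω in s, mB n j ω ∂μ = 0 := by
      intro n j s hs
      rw [hmB_eq n j, integral_indicator (ℱ.le j _ (hDset j)),
        Measure.restrict_restrict (ℱ.le j _ (hDset j))]
      have hmeas : MeasurableSet[ℱ j] ({ω | D j ω} ∩ s) := (hDset j).inter hs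
      rw [integral_sub ((hτmart n).integrable (j+1)).integrableOn
        ((hτmart n).integrable j).integrableOn, sub_eq_zero]
      exact ((hτmart n).setIntegral_eq (Nat.le_succ j) hmeas).symm
    have hdBmeas : ∀ n j, Measurable (dB n j) := by
      intro n j
      simp only [hdBdef]
      exact Measurable.ite (ℱ.le j _ (hcpset n j))
        (((hGmeas1 j).mono (ℱ.le j) le_rfl).sub ((hGmeas j).mono (ℱ.le j) le_rfl))
        measurable_const
    have hdBnn : ∀ n j (ω : Ω), 0 ≤ dB n j ω := by
      intro n j ω
      simp only [hdBdef]
      by_cases h : cp n j ω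
      · rw [if_pos h]; exact sub_nonneg.2 (hGstep j ω)
      · rw [if_neg h]
    have hξaint : Integrable (fun ω => ξ ω + (a:ℝ)) μ := hξint.add (integrable_const _)
    have hint : ∀ n i, Integrable (Y n i) μ ∧ Integrable (Stmt12Aux.psum (cp n) G i) μ := by
      intro n i
      induction i with
      | zero =>
          constructor
          · have h1 : Y n 0 = fun ω => ξ ω + (a:ℝ) := by
              funext ω; simp [hYdef, Stmt12Aux.psum_zero]
            rw [h1]
            exact hξaint
          · have h1 : Stmt12Aux.psum (cp n) G 0 = fun _ => (0:ℝ) := by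
              funext ω; simp [Stmt12Aux.psum_zero]
            rw [h1]; exact integrable_const 0
      | succ i ih =>
          have hdint : Integrable (dB n i) μ := by
            refine (ih.1.add (hmBint n i)).mono' (hdBmeas n i).aestronglyMeasurable ?_
            filter_upwards [hYnn n (i+1)] with ω hω
            have hs := hYsucc n i ω
            have hd0 := hdBnn n i ω
            rw [Real.norm_of_nonneg hd0]
            have hY0 : (0:ℝ) ≤ Y n (i+1) ω := hω
            simp only [Pi.add_apply]
            linarith
          refine ⟨?_, ?_⟩
          · have h1 : Y n (i+1) = fun ω => Y n i ω + (mB n i ω - dB n i ω) :=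
              funext (hYsucc n i)
            rw [h1]
            exact ih.1.add ((hmBint n i).sub hdint)
          · have h1 : Stmt12Aux.psum (cp n) G (i+1) =
                fun ω => Stmt12Aux.psum (cp n) G i ω + dB n i ω := by
              funext ω
              rw [Stmt12Aux.psum_succ]
              simp [hdBdef]
            rw [h1]
            exact ih.2.add hdint
    -- integral identities and bounds
    set Iξ : ℝ := ∫ ω, ξ ω ∂μ with hIξ
    have hξa : ∫ ω, (ξ ω + (a:ℝ)) ∂μ = Iξ + a := by
      rw [integral_add hξint (integrable_const _), integral_const]
      simp [hIξ, measure_univ]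
    have hYsplit : ∀ n i (ω:Ω), Y n i ω =
        (ξ ω + (a:ℝ)) + Stmt12Aux.psum (cp n) M i ω - Stmt12Aux.psum (cp n) G i ω := by
      intro n i ω
      have h1 := Stmt12Aux.psum_sub (cp n) M G i ω
      simp only [hYdef, hFdef]
      rw [h1]
      ring
    have hMpartint : ∀ n i, Integrable (Stmt12Aux.psum (cp n) M i) μ := by
      intro n i
      have h1 : Stmt12Aux.psum (cp n) M i =
          fun ω => (Y n i ω - (ξ ω + (a:ℝ))) + Stmt12Aux.psum (cp n) G i ω := by
        funext ω; rw [hYsplit n i ω]; ring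
      rw [h1]
      exact ((hint n i).1.sub hξaint).add (hint n i).2
    have hMpartzero : ∀ n i, ∫ ω, Stmt12Aux.psum (cp n) M i ω ∂μ = 0 := by
      intro n i
      have h1 : Stmt12Aux.psum (cp n) M i = fun ω => ∑ j ∈ Finset.range i, mB n j ω := by
        funext ω
        simp only [Stmt12Aux.psum, hmBdef]
        refine Finset.sum_congr rfl fun j _ => ?_
        by_cases h : cp n j ω
        · simp [h]
        · simp [h]
      rw [h1, integral_finset_sum _ (fun j _ => hmBint n j)]
      refine Finset.sum_eq_zero fun j _ => ?_
      have h2 := hmBset n j Set.univ MeasurableSet.univ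
      simpa [Measure.restrict_univ] using h2
    have hGpint : ∀ n i, ∫ ω, Stmt12Aux.psum (cp n) G i ω ∂μ ≤ Iξ + a ∧
        ∫ ω, Y n i ω ∂μ ≤ Iξ + a := by
      intro n i
      have hval : ∫ ω, Y n i ω ∂μ = (Iξ + a) - ∫ ω, Stmt12Aux.psum (cp n) G i ω ∂μ := by
        have h1 : ∫ ω, Y n i ω ∂μ = ∫ ω, (((ξ ω + (a:ℝ)) + Stmt12Aux.psum (cp n) M i ω)
            - Stmt12Aux.psum (cp n) G i ω) ∂μ :=
          integral_congr_ae (Eventually.of_forall fun ω => by rw [hYsplit n i ω])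
        have hfint : Integrable (fun ω => (ξ ω + (a:ℝ)) + Stmt12Aux.psum (cp n) M i ω) μ :=
          hξaint.add (hMpartint n i)
        rw [h1, integral_sub hfint (hint n i).2, integral_add hξaint (hMpartint n i),
          hMpartzero n i, hξa]
        ring
      have h0le : 0 ≤ ∫ ω, Y n i ω ∂μ := integral_nonneg_of_ae (hYnn n i)
      have hGple : 0 ≤ ∫ ω, Stmt12Aux.psum (cp n) G i ω ∂μ :=
        integral_nonneg (fun ω => Stmt12Aux.psum_nonneg hGstep i ω)
      constructor
      · linarith
      · linarith
    set B : ℝ≥0∞ := ENNReal.ofReal (Iξ + a) with hBdef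
    have hYlint : ∀ n i, ∫⁻ ω, ENNReal.ofReal (Y n i ω) ∂μ ≤ B := by
      intro n i
      rw [← ofReal_integral_eq_lintegral_ofReal (hint n i).1 (hYnn n i)]
      exact ENNReal.ofReal_le_ofReal (hGpint n i).2
    have hGplint : ∀ n i, ∫⁻ ω, ENNReal.ofReal (Stmt12Aux.psum (cp n) G i ω) ∂μ ≤ B := by
      intro n i
      rw [← ofReal_integral_eq_lintegral_ofReal (hint n i).2
        (Eventually.of_forall fun ω => Stmt12Aux.psum_nonneg hGstep i ω)]
      exact ENNReal.ofReal_le_ofReal (hGpint n i).1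
    -- measurability
    have hpsum_measF : ∀ (cc : ℕ → Ω → Prop), (∀ j, MeasurableSet[ℱ j] {ω | cc j ω}) →
        ∀ (f : ℕ → Ω → ℝ), (∀ j, Measurable[ℱ j] (f j)) →
        ∀ i, Measurable[ℱ i] (Stmt12Aux.psum cc f i) := by
      intro cc hcc f hf i
      have h1 : Stmt12Aux.psum cc f i =
          fun ω => ∑ j ∈ Finset.range i, if cc j ω then f (j+1) ω - f j ω else 0 := rfl
      rw [h1]
      refine Finset.measurable_sum _ fun j hj => ?_
      rw [Finset.mem_range] at hj
      refine Measurable.ite (ℱ.mono hj.le _ (hcc j)) ?_ measurable_const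
      exact ((hf (j+1)).mono (ℱ.mono (Nat.succ_le_of_lt hj)) le_rfl).sub
        ((hf j).mono (ℱ.mono hj.le) le_rfl)
    have hFmF : ∀ j, Measurable[ℱ j] (F j) := fun j => (hMadp j).sub (hGmeas j)
    have hZmeasF : ∀ i, Measurable[ℱ i] (Z i) := by
      intro i
      have hp := hpsum_measF D hDset F hFmF i
      exact ((hξmeas.mono (ℱ.mono (Nat.zero_le i)) le_rfl).add_const _).add hp
    have hZmeas : ∀ i, Measurable (Z i) := fun i => (hZmeasF i).mono (ℱ.le i) le_rfl
    have hYmeas : ∀ n i, Measurable (Y n i) := by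
      intro n i
      have hp := hpsum_measF (cp n) (hcpset n) F hFmF i
      exact ((hξmeas.mono (ℱ.le 0) le_rfl).add_const _).add (hp.mono (ℱ.le i) le_rfl)
    have hGσmeas : ∀ i, Measurable (Stmt12Aux.psum D G i) :=
      fun i => (hpsum_measF D hDset G hGmeas i).mono (ℱ.le i) le_rfl
    have hGpmeas : ∀ n i, Measurable (Stmt12Aux.psum (cp n) G i) :=
      fun n i => (hpsum_measF (cp n) (hcpset n) G hGmeas i).mono (ℱ.le i) le_rfl
    -- limits as n → ∞
    have hYZ : ∀ i (ω:Ω), ∀ᶠ n in atTop, Y n i ω = Z i ω := by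
      intro i ω
      filter_upwards [(hτtend ω).eventually_ge_atTop i] with n hn
      have h1 : Stmt12Aux.psum (cp n) F i ω = Stmt12Aux.psum D F i ω :=
        Stmt12Aux.psum_congr F (fun j hj =>
          ⟨fun h => h.1, fun h => ⟨h, lt_of_lt_of_le hj hn⟩⟩)
      simp only [hYdef, hZdef, h1]
    have hGZ : ∀ i (ω:Ω), ∀ᶠ n in atTop,
        Stmt12Aux.psum (cp n) G i ω = Stmt12Aux.psum D G i ω := by
      intro i ω
      filter_upwards [(hτtend ω).eventually_ge_atTop i] with n hn
      exact Stmt12Aux.psum_congr G (fun j hj =>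
        ⟨fun h => h.1, fun h => ⟨h, lt_of_lt_of_le hj hn⟩⟩)
    have hliminf : ∀ (W : Ω → ℝ) (Wn : ℕ → Ω → ℝ), (∀ n, Measurable (Wn n)) →
        (∀ ω, ∀ᶠ n in atTop, Wn n ω = W ω) →
        (∀ n, ∫⁻ ω, ENNReal.ofReal (Wn n ω) ∂μ ≤ B) →
        ∫⁻ ω, ENNReal.ofReal (W ω) ∂μ ≤ B := by
      intro W Wn hmeas hlim hbd
      have h1 : (fun ω => ENNReal.ofReal (W ω)) =
          fun ω => liminf (fun n => ENNReal.ofReal (Wn n ω)) atTop := by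
        funext ω
        have h2 : Tendsto (fun n => ENNReal.ofReal (Wn n ω)) atTop
            (nhds (ENNReal.ofReal (W ω))) := by
          refine tendsto_const_nhds.congr' ?_
          filter_upwards [hlim ω] with n hn
          rw [hn]
        exact h2.liminf_eq.symm
      rw [h1]
      refine le_trans (lintegral_liminf_le fun n => (hmeas n).ennreal_ofReal) ?_
      refine le_trans (liminf_le_liminf (Eventually.of_forall hbd)) ?_
      simp
    have hZlint : ∀ i, ∫⁻ ω, ENNReal.ofReal (Z i ω) ∂μ ≤ B := fun i =>
      hliminf (Z i) (fun n => Y n i) (fun n => hYmeas n i) (fun ω => hYZ i ω)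
        (fun n => hYlint n i)
    have hGσlint : ∀ i, ∫⁻ ω, ENNReal.ofReal (Stmt12Aux.psum D G i ω) ∂μ ≤ B := fun i =>
      hliminf _ (fun n => Stmt12Aux.psum (cp n) G i) (fun n => hGpmeas n i)
        (fun ω => hGZ i ω) (fun n => hGplint n i)
    have hofint : ∀ (W : Ω → ℝ), Measurable W → (0 ≤ᵐ[μ] W) →
        (∫⁻ ω, ENNReal.ofReal (W ω) ∂μ ≤ B) → Integrable W μ := by
      intro W hm hnn hb
      have heq : ∫⁻ ω, (‖W ω‖₊ : ℝ≥0∞) ∂μ = ∫⁻ ω, ENNReal.ofReal (W ω) ∂μ :=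
        lintegral_congr_ae (by
          filter_upwards [hnn] with ω h
          exact Real.enorm_eq_ofReal h)
      refine ⟨hm.aestronglyMeasurable, ?_⟩
      show (∫⁻ ω, (‖W ω‖₊ : ℝ≥0∞) ∂μ) < ⊤
      rw [heq]
      exact lt_of_le_of_lt hb ENNReal.ofReal_lt_top
    have hZint : ∀ i, Integrable (Z i) μ :=
      fun i => hofint (Z i) (hZmeas i) (hZnn i) (hZlint i)
    have hGσint : ∀ i, Integrable (Stmt12Aux.psum D G i) μ :=
      fun i => hofint _ (hGσmeas i)
        (Eventually.of_forall fun ω => Stmt12Aux.psum_nonneg hGstep i ω) (hGσlint i)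
    -- second conclusion: finiteness of the supremum
    have hsupfin : ∀ᵐ ω ∂μ, (⨆ i, ENNReal.ofReal (Stmt12Aux.psum D G i ω)) < ⊤ := by
      have hmono_sup : Monotone (fun i => fun ω => ENNReal.ofReal (Stmt12Aux.psum D G i ω)) :=
        fun i j hij ω => ENNReal.ofReal_le_ofReal (Stmt12Aux.psum_mono_index hGstep hij ω)
      refine ae_lt_top (Measurable.iSup fun i => (hGσmeas i).ennreal_ofReal) ?_
      rw [lintegral_iSup (fun i => (hGσmeas i).ennreal_ofReal) hmono_sup]
      exact (lt_of_le_of_lt (iSup_le fun i => hGσlint i) ENNReal.ofReal_lt_top).ne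
    -- supermartingale structure of Z
    set dZ : ℕ → Ω → ℝ := fun j ω => if D j ω then G (j + 1) ω - G j ω else 0 with hdZdef
    set mZ : ℕ → Ω → ℝ := fun j ω => if D j ω then M (j + 1) ω - M j ω else 0 with hmZdef
    have hZsucc : ∀ i (ω : Ω), Z (i + 1) ω = Z i ω + (mZ i ω - dZ i ω) := by
      intro i ω
      simp only [hZdef, hmZdef, hdZdef, Stmt12Aux.psum_succ, hFdef]
      by_cases h : D i ω
      · simp only [if_pos h]; ring
      · simp only [if_neg h]; ring
    have hdZnn : ∀ i (ω : Ω), 0 ≤ dZ i ω := by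
      intro i ω
      simp only [hdZdef]
      by_cases h : D i ω
      · rw [if_pos h]; exact sub_nonneg.2 (hGstep i ω)
      · rw [if_neg h]
    have hdZint : ∀ i, Integrable (dZ i) μ := by
      intro i
      have h1 : dZ i = fun ω => Stmt12Aux.psum D G (i+1) ω - Stmt12Aux.psum D G i ω := by
        funext ω; rw [Stmt12Aux.psum_succ]; simp [hdZdef]
      rw [h1]; exact (hGσint (i+1)).sub (hGσint i)
    have hmZint : ∀ i, Integrable (mZ i) μ := by
      intro i
      have h1 : mZ i = fun ω => (Z (i+1) ω - Z i ω) + dZ i ω := by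
        funext ω; rw [hZsucc i ω]; ring
      rw [h1]; exact ((hZint (i+1)).sub (hZint i)).add (hdZint i)
    have hmZmB : ∀ i (ω:Ω), ∀ᶠ n in atTop, mB n i ω = mZ i ω := by
      intro i ω
      filter_upwards [(hτtend ω).eventually_gt_atTop i] with n hn
      simp only [hmBdef, hmZdef]
      by_cases h : D i ω
      · rw [if_pos (⟨h, hn⟩ : cp n i ω), if_pos h]
      · rw [if_neg (fun hc : cp n i ω => h hc.1), if_neg h]
    have hmZset : ∀ i (s : Set Ω), MeasurableSet[ℱ i] s → ∫ ω in s, mZ i ω ∂μ = 0 := by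
      intro i s hs
      have hDCT : Tendsto (fun n => ∫ ω in s, mB n i ω ∂μ) atTop
          (nhds (∫ ω in s, mZ i ω ∂μ)) := by
        refine tendsto_integral_of_dominated_convergence (fun ω => |mZ i ω|)
          (fun n => ((hmBint n i).restrict).aestronglyMeasurable)
          (((hmZint i).abs).restrict) ?_ ?_
        · intro n
          refine Eventually.of_forall fun ω => ?_
          simp only [hmBdef, hmZdef, Real.norm_eq_abs]
          by_cases h : cp n i ω
          · rw [if_pos h, if_pos h.1]
          · rw [if_neg h, abs_zero]; exact abs_nonneg _
        · refine Eventually.of_forall fun ω => ?_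
          refine tendsto_const_nhds.congr' ?_
          filter_upwards [hmZmB i ω] with n hn
          rw [hn]
      have hz : (fun n => ∫ ω in s, mB n i ω ∂μ) = fun _ => (0:ℝ) :=
        funext fun n => hmBset n i s hs
      rw [hz] at hDCT
      exact (tendsto_nhds_unique hDCT tendsto_const_nhds)
    have hmZcond : ∀ i, (0 : Ω → ℝ) =ᵐ[μ] μ[mZ i | ℱ i] := by
      intro i
      refine ae_eq_condExp_of_forall_setIntegral_eq (ℱ.le i) (hmZint i)
        (fun s _ _ => (integrable_zero _ _ _).integrableOn) ?_ ?_
      · intro s hs _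
        rw [hmZset i s hs]
        simp
      · exact ⟨fun _ => 0, stronglyMeasurable_const, EventuallyEq.rfl⟩
    have hdZsm : ∀ i, StronglyMeasurable[ℱ i] (dZ i) := by
      intro i
      exact (Measurable.ite (hDset i) ((hGmeas1 i).sub (hGmeas i))
        measurable_const).stronglyMeasurable
    have hcondZ : ∀ i, μ[Z (i+1) | ℱ i] ≤ᵐ[μ] Z i := by
      intro i
      have h1 : Z (i+1) = fun ω => Z i ω + (mZ i ω - dZ i ω) := funext (hZsucc i)
      have hZeq : μ[Z i|ℱ i] = Z i :=
        condExp_of_stronglyMeasurable (ℱ.le i) (hZmeasF i).stronglyMeasurable (hZint i)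
      have hdZeq : μ[dZ i|ℱ i] = dZ i :=
        condExp_of_stronglyMeasurable (ℱ.le i) (hdZsm i) (hdZint i)
      have h2 : μ[Z (i+1)|ℱ i] =ᵐ[μ] μ[Z i|ℱ i] + (μ[mZ i|ℱ i] - μ[dZ i|ℱ i]) := by
        rw [h1]
        refine (condExp_add (hZint i) ((hmZint i).sub (hdZint i)) _).trans ?_
        exact EventuallyEq.add (EventuallyEq.refl _ _) (condExp_sub (hmZint i) (hdZint i) _)
      refine h2.le.trans ?_
      rw [hZeq, hdZeq]
      filter_upwards [hmZcond i] with ω hω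
      have hωv : (0:ℝ) = (μ[mZ i|ℱ i]) ω := hω
      simp only [Pi.add_apply, Pi.sub_apply]
      rw [← hωv]
      have := hdZnn i ω
      linarith
    have hZsuper : Supermartingale Z ℱ μ :=
      supermartingale_nat (fun i => (hZmeasF i).stronglyMeasurable) hZint hcondZ
    have hbddZ : ∀ i, eLpNorm ((-Z) i) 1 μ ≤ (Iξ + (a:ℝ)).toNNReal := by
      intro i
      have h1 : (-Z) i = -(Z i) := rfl
      rw [h1, eLpNorm_neg, eLpNorm_one_eq_lintegral_enorm]
      have heq : ∫⁻ ω, ‖Z i ω‖ₑ ∂μ = ∫⁻ ω, ENNReal.ofReal (Z i ω) ∂μ :=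
        lintegral_congr_ae (by
          filter_upwards [hZnn i] with ω h
          exact Real.enorm_eq_ofReal h)
      rw [heq]
      exact hZlint i
    have hZconv := hZsuper.neg.exists_ae_tendsto_of_bdd hbddZ
    filter_upwards [hZconv, hsupfin] with ω hc hs
    refine ⟨?_, hs⟩
    obtain ⟨cl, hcl⟩ := hc
    have h2 : Tendsto (fun i => Z i ω) atTop (nhds (-cl)) := by
      have h3 := hcl.neg
      simp only [Pi.neg_apply, neg_neg] at h3
      exact h3
    exact ⟨-cl, h2⟩
  -- final assembly
  filter_upwards [ae_all_iff.2 key, hM0, hξ₂0] with ω hkey h0 h20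
  intro hB
  obtain ⟨b, hb⟩ := hB
  set A : ℕ := ⌈b⌉₊ with hA
  set D : ℕ → Ω → Prop := fun j ω' => ∀ k ≤ j, ξ₁ (k + 1) ω' ≤ (A : ℝ) with hD
  have hDall : ∀ j, D j ω := by
    intro j k _
    exact le_trans (hb (Set.mem_range_self (k + 1))) (Nat.le_ceil b)
  obtain ⟨hconv, hsup⟩ := hkey A
  have hGval : ∀ i, Stmt12Aux.psum D G i ω = G i ω := by
    intro i
    rw [Stmt12Aux.psum_of_all G (fun j _ => hDall j), hG0, sub_zero]
  constructor
  · -- boundedness of ξ₂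
    have hne : (⨆ i, ENNReal.ofReal (Stmt12Aux.psum D G i ω)) ≠ ⊤ := hsup.ne
    refine ⟨(⨆ i, ENNReal.ofReal (Stmt12Aux.psum D G i ω)).toReal, ?_⟩
    rintro x ⟨i, rfl⟩
    cases i with
    | zero =>
        show ξ₂ 0 ω ≤ _
        rw [h20]; exact ENNReal.toReal_nonneg
    | succ k =>
        have h1 : ENNReal.ofReal (Stmt12Aux.psum D G (k + 1) ω) ≤
            ⨆ i, ENNReal.ofReal (Stmt12Aux.psum D G i ω) :=
          le_iSup (fun i => ENNReal.ofReal (Stmt12Aux.psum D G i ω)) (k + 1)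
        have h2 := (ENNReal.ofReal_le_iff_le_toReal hne).1 h1
        rw [hGval, hGsucc] at h2
        exact h2
  · -- convergence of η
    obtain ⟨cz, hcz⟩ := hconv
    have hξ₁t : Tendsto (fun i => ξ₁ i ω) atTop (nhds (⨆ i, ξ₁ i ω)) :=
      tendsto_atTop_ciSup (hξ₁mono ω) ⟨b, hb⟩
    refine ⟨cz - A + ⨆ i, ξ₁ i ω, ?_⟩
    have h2 : Tendsto
        (fun i => (ξ ω + (A : ℝ) + Stmt12Aux.psum D F i ω) - (A : ℝ) + ξ₁ i ω)
        atTop (nhds (cz - A + ⨆ i, ξ₁ i ω)) :=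
      (hcz.sub tendsto_const_nhds).add hξ₁t
    refine h2.congr' ?_
    filter_upwards [eventually_ge_atTop 1] with i hi
    have hFi : Stmt12Aux.psum D F i ω = M i ω - ξ₂ i ω := by
      rw [Stmt12Aux.psum_of_all F (fun j _ => hDall j)]
      have : F 0 ω = 0 := by simp [hFdef, hG0, h0]
      rw [this, sub_zero]
      have hGi : G i ω = ξ₂ i ω := by
        obtain ⟨k, rfl⟩ := Nat.exists_eq_add_of_le' hi
        simpa using hGsucc k ω
      simp [hFdef, hGi]
    rw [hFi, hη i ω]
    ring
end
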